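/- Let φ solve φ'(r) = (1+φ²(r))(c - (n-1)(ξ'(r)/ξ(r)) φ(r)) on (R, ∞) with c > 0 and ξ', ξ > 0. If there exist ε > 0 and r₀ > R such that φ(r) < (1-ε)(c/(n-1)) ξ(r)/ξ'(r) for all r > r₀, then φ'(r) > cε(1+φ²(r)) for all r > r₀, and hence cε(r - r_*) < arctan φ(r) - arctan φ(r_*) for r > r_* > r₀; consequently no such solution can be defined on all of (r₀, ∞). Therefore for every ε > 0 and r₀ > R there exists r₁ > r₀ with φ(r₁) ≥ (1-ε)(c/(n-1)) ξ(r₁)/ξ'(r₁). -/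

import Mathlib

/-- Let φ solve φ' = (1+φ²)(c - (n-1)(ξ'/ξ)φ) on (R,∞) with c > 0 and
ξ, ξ' > 0. If φ(r) < (1-ε)(c/(n-1))ξ/ξ' for all r > r₀, then φ' > cε(1+φ²) there,
hence cε(r - r_*) < arctan φ(r) - arctan φ(r_*); consequently (since φ is defined on
all of (r₀,∞) and arctan is bounded) for every ε > 0 and r₀ > R there is r₁ > r₀ with
φ(r₁) ≥ (1-ε)(c/(n-1))ξ(r₁)/ξ'(r₁). -/
theorem stmt_9 (n : ℕ) (hn : 2 ≤ n) (c R : ℝ) (hc : 0 < c) (hR : 0 ≤ R)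
    (ξ φ : ℝ → ℝ)
    (hξ : ∀ r > R, 0 < ξ r) (hξ' : ∀ r > R, 0 < deriv ξ r)
    (hφ : ∀ r > R,
      HasDerivAt φ ((1 + φ r ^ 2) * (c - (n - 1 : ℝ) * (deriv ξ r / ξ r) * φ r)) r) :
    (∀ ε > (0:ℝ), ∀ r₀ > R,
      (∀ r > r₀, φ r < (1 - ε) * (c / (n - 1 : ℝ)) * (ξ r / deriv ξ r)) →
        (∀ r > r₀, deriv φ r > c * ε * (1 + φ r ^ 2)) ∧
        (∀ rs r : ℝ, r₀ < rs → rs < r →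
          c * ε * (r - rs) < Real.arctan (φ r) - Real.arctan (φ rs))) ∧
    (∀ ε > (0:ℝ), ∀ r₀ > R, ∃ r₁ > r₀,
      (1 - ε) * (c / (n - 1 : ℝ)) * (ξ r₁ / deriv ξ r₁) ≤ φ r₁) := by
  have hn1 : (1:ℝ) ≤ (n:ℝ) - 1 := by
    have : (2:ℝ) ≤ (n:ℝ) := by exact_mod_cast hn
    linarith
  have hn1pos : (0:ℝ) < (n:ℝ) - 1 := by linarith
  -- core algebraic estimate
  have key : ∀ ε > (0:ℝ), ∀ r₀ > R,
      (∀ r > r₀, φ r < (1 - ε) * (c / (n - 1 : ℝ)) * (ξ r / deriv ξ r)) →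
      ∀ r > r₀, c * ε <
        c - (n - 1 : ℝ) * (deriv ξ r / ξ r) * φ r := by
    intro ε hε r₀ hr₀ hb r hr
    have hrR : R < r := lt_trans hr₀ hr
    have hA := hξ' r hrR
    have hB := hξ r hrR
    have hlt := hb r hr
    have h2 : (n - 1 : ℝ) * (deriv ξ r / ξ r) * φ r
        < (n - 1 : ℝ) * (deriv ξ r / ξ r) *
          ((1 - ε) * (c / (n - 1 : ℝ)) * (ξ r / deriv ξ r)) := by
      apply mul_lt_mul_of_pos_left hlt
      positivity
    have h3 : (n - 1 : ℝ) * (deriv ξ r / ξ r) *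
        ((1 - ε) * (c / (n - 1 : ℝ)) * (ξ r / deriv ξ r)) = (1 - ε) * c := by
      field_simp
    rw [h3] at h2
    nlinarith
  have main : ∀ ε > (0:ℝ), ∀ r₀ > R,
      (∀ r > r₀, φ r < (1 - ε) * (c / (n - 1 : ℝ)) * (ξ r / deriv ξ r)) →
        (∀ r > r₀, deriv φ r > c * ε * (1 + φ r ^ 2)) ∧
        (∀ rs r : ℝ, r₀ < rs → rs < r →
          c * ε * (r - rs) < Real.arctan (φ r) - Real.arctan (φ rs)) := by
    intro ε hε r₀ hr₀ hb
    constructor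
    · intro r hr
      have hrR : R < r := lt_trans hr₀ hr
      have hd := (hφ r hrR).deriv
      rw [hd]
      have hk := key ε hε r₀ hr₀ hb r hr
      have hsq : (0:ℝ) < 1 + φ r ^ 2 := by positivity
      nlinarith
    · intro rs r hrs hr
      set g : ℝ → ℝ := fun x => Real.arctan (φ x) - c * ε * x with hg
      have hderivg : ∀ x ∈ Set.Ioo rs r, HasDerivAt g
          ((1 + φ x ^ 2) * (c - (n - 1 : ℝ) * (deriv ξ x / ξ x) * φ x) / (1 + φ x ^ 2)
            - c * ε) x := by
        intro x hx
        have hxR : R < x := lt_trans hr₀ (lt_trans hrs hx.1)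
        have h1 : HasDerivAt (fun x => Real.arctan (φ x))
            ((1 + φ x ^ 2) * (c - (n - 1 : ℝ) * (deriv ξ x / ξ x) * φ x) / (1 + φ x ^ 2)) x := by
          have := (hφ x hxR).arctan
          rw [div_eq_inv_mul, ← one_div]
          exact this
        have h2 : HasDerivAt (fun x : ℝ => c * ε * x) (c * ε) x := by
          simpa using (hasDerivAt_id x).const_mul (c * ε)
        exact h1.sub h2
      have hcont : ContinuousOn g (Set.Icc rs r) := by
        intro x hx
        have hxR : R < x := lt_of_lt_of_le (lt_trans hr₀ hrs) hx.1
        exact (((Real.continuous_arctan.continuousAt.comp (hφ x hxR).continuousAt)).sub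
          ((continuous_const.mul continuous_id).continuousAt)).continuousWithinAt
      have hmono : StrictMonoOn g (Set.Icc rs r) := by
        apply strictMonoOn_of_deriv_pos (convex_Icc rs r) hcont
        intro x hx
        rw [interior_Icc] at hx
        have hd := hderivg x hx
        rw [hd.deriv]
        have hsq : (0:ℝ) < 1 + φ x ^ 2 := by positivity
        have hk := key ε hε r₀ hr₀ hb x (lt_trans hrs hx.1)
        rw [mul_div_assoc, mul_comm, div_mul_cancel₀ _ hsq.ne']
        linarith
      have := hmono (Set.left_mem_Icc.mpr hr.le) (Set.right_mem_Icc.mpr hr.le) hr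
      simp only [hg] at this
      linarith
  refine ⟨main, ?_⟩
  intro ε hε r₀ hr₀
  by_contra hcon
  push_neg at hcon
  have hb : ∀ r > r₀, φ r < (1 - ε) * (c / (n - 1 : ℝ)) * (ξ r / deriv ξ r) := by
    intro r hr
    exact hcon r hr
  have hcε : 0 < c * ε := mul_pos hc hε
  obtain ⟨-, h2⟩ := main ε hε r₀ hr₀ hb
  set rs := r₀ + 1 with hrs
  set r := rs + Real.pi / (c * ε) + 1 with hr
  have hrsr : rs < r := by
    have : 0 < Real.pi / (c * ε) := by positivity
    simp only [hr]; linarith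
  have hgrow := h2 rs r (by simp [hrs]) hrsr
  have hval : c * ε * (r - rs) = Real.pi + c * ε := by
    simp only [hr]
    field_simp
    ring
  have ha1 := Real.arctan_lt_pi_div_two (φ r)
  have ha2 := Real.neg_pi_div_two_lt_arctan (φ rs)
  rw [hval] at hgrow
  linarith
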